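/- Suppose the matrix P = diag(κ₁, …, κ_p) − Λ is positive definite. Then θ = μ is a local maximum of f, and every local maximum θ of f satisfies θ_i ≡ μ_i (mod 2π) for all i; in particular, the global maximum of the multivariate von Mises density is attained at θ = μ and the density has no other local maxima. -/

import Mathlib

open Real

private lemma dp_form {p : ℕ} (Λ : Matrix (Fin p) (Fin p) ℝ) (v : Fin p → ℝ) :
    ∑ i, ∑ j, v i * Λ i j * v j = dotProduct v (Λ.mulVec v) := by
  simp only [dotProduct, Matrix.mulVec, Finset.mul_sum]
  exact Finset.sum_congr rfl fun i _ => Finset.sum_congr rfl fun j _ => by ring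

private lemma q_form {p : ℕ} (κ : Fin p → ℝ) (Λ : Matrix (Fin p) (Fin p) ℝ) (v : Fin p → ℝ) :
    dotProduct v ((Matrix.diagonal κ - Λ).mulVec v)
      = ∑ i, κ i * v i ^ 2 - dotProduct v (Λ.mulVec v) := by
  rw [Matrix.sub_mulVec, dotProduct_sub]
  congr 1
  simp only [dotProduct, Matrix.mulVec_diagonal]
  exact Finset.sum_congr rfl fun i _ => by ring

private lemma expand_update {p : ℕ} (μ κ : Fin p → ℝ) (Λ : Matrix (Fin p) (Fin p) ℝ)
    (hΛsym : Λ.IsSymm) (hΛdiag : ∀ i, Λ i i = 0)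
    (f : (Fin p → ℝ) → ℝ)
    (hf : ∀ θ, f θ = ∑ i, κ i * Real.cos (θ i - μ i)
        + (1 / 2) * ∑ i, ∑ j, Real.sin (θ i - μ i) * Λ i j * Real.sin (θ j - μ j))
    (θ : Fin p → ℝ) (i : Fin p) (t : ℝ) :
    f (Function.update θ i t) = f θ
      + κ i * (Real.cos (t - μ i) - Real.cos (θ i - μ i))
      + (∑ j, Λ i j * Real.sin (θ j - μ j)) * (Real.sin (t - μ i) - Real.sin (θ i - μ i)) := by
  rw [hf (Function.update θ i t), hf θ]
  set s : Fin p → ℝ := fun j => Real.sin (θ j - μ j) with hs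
  set d : ℝ := Real.sin (t - μ i) - s i with hd
  have hsum1 : ∑ j, κ j * Real.cos (Function.update θ i t j - μ j)
      = ∑ j, κ j * Real.cos (θ j - μ j)
        + κ i * (Real.cos (t - μ i) - Real.cos (θ i - μ i)) := by
    have h1 : (fun j => κ j * Real.cos (Function.update θ i t j - μ j))
        = Function.update (fun j => κ j * Real.cos (θ j - μ j)) i (κ i * Real.cos (t - μ i)) := by
      funext j
      rcases eq_or_ne j i with h | h
      · subst h; simp
      · simp [Function.update_of_ne h]
    rw [h1, Finset.sum_update_of_mem (Finset.mem_univ i)]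
    conv_rhs => rw [Finset.sum_eq_sum_sdiff_singleton_add (Finset.mem_univ i)
      (fun j => κ j * Real.cos (θ j - μ j))]
    ring
  have hupd : (fun j => Real.sin (Function.update θ i t j - μ j)) = s + Pi.single i d := by
    funext j
    rcases eq_or_ne j i with h | h
    · subst h; simp [hd]
    · simp [Function.update_of_ne h, Pi.single_eq_of_ne h, hs]
  have hq : ∑ j, ∑ k, Real.sin (Function.update θ i t j - μ j) * Λ j k
        * Real.sin (Function.update θ i t k - μ k)
      = ∑ j, ∑ k, s j * Λ j k * s k + 2 * (d * ∑ j, Λ i j * s j) := by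
    have e1 : ∑ j, ∑ k, Real.sin (Function.update θ i t j - μ j) * Λ j k
        * Real.sin (Function.update θ i t k - μ k)
        = dotProduct (s + Pi.single i d) (Λ.mulVec (s + Pi.single i d)) := by
      rw [← hupd]; exact dp_form Λ _
    have h1 : dotProduct (Pi.single i d) (Λ.mulVec s) = d * ∑ j, Λ i j * s j := by
      rw [single_dotProduct]
      simp only [Matrix.mulVec, dotProduct]
    have h2 : dotProduct s (Λ.mulVec (Pi.single i d)) = d * ∑ j, Λ i j * s j := by
      rw [Matrix.mulVec_single]
      simp only [dotProduct, Finset.mul_sum, Pi.smul_apply, op_smul_eq_mul, Matrix.col_apply]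
      exact Finset.sum_congr rfl fun j _ => by rw [hΛsym.apply j i]; ring
    have h3 : dotProduct (Pi.single i d) (Λ.mulVec (Pi.single i d)) = 0 := by
      rw [Matrix.mulVec_single, single_dotProduct, Pi.smul_apply, op_smul_eq_mul, Matrix.col_apply, hΛdiag i]
      ring
    rw [e1, Matrix.mulVec_add, dotProduct_add, add_dotProduct,
      add_dotProduct, h1, h2, h3, ← dp_form]
    ring
  rw [hsum1, hq]
  ring

theorem stmt_0 (p : ℕ) (hp : 1 ≤ p) (μ κ : Fin p → ℝ)
    (hκ : ∀ i, 0 ≤ κ i)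
    (Λ : Matrix (Fin p) (Fin p) ℝ) (hΛsym : Λ.IsSymm)
    (hΛdiag : ∀ i, Λ i i = 0)
    (hP : (Matrix.diagonal κ - Λ).PosDef)
    (f : (Fin p → ℝ) → ℝ)
    (hf : ∀ θ, f θ = ∑ i, κ i * Real.cos (θ i - μ i)
        + (1 / 2) * ∑ i, ∑ j, Real.sin (θ i - μ i) * Λ i j * Real.sin (θ j - μ j)) :
    IsLocalMax f μ ∧ (∀ θ, f θ ≤ f μ) ∧
      (∀ θ, IsLocalMax f θ → ∀ i, ∃ k : ℤ, θ i = μ i + 2 * π * (k : ℝ)) := by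
  -- positivity of diagonal entries
  have hκpos : ∀ i, 0 < κ i := by
    intro i
    have hne : (Pi.single i 1 : Fin p → ℝ) ≠ 0 := by
      intro h; have := congrFun h i; simp at this
    have h2 := hP.dotProduct_mulVec_pos hne
    simpa [single_dotProduct, Matrix.mulVec_single, Matrix.sub_apply,
      Matrix.diagonal_apply_eq, hΛdiag] using h2
  -- the quadratic form is nonnegative
  have hQnn : ∀ v : Fin p → ℝ,
      0 ≤ dotProduct v ((Matrix.diagonal κ - Λ).mulVec v) := by
    intro v
    rcases eq_or_ne v 0 with h | h
    · simp [h]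
    · have h2 := hP.dotProduct_mulVec_pos h
      have h3 : (0:ℝ) < dotProduct v ((Matrix.diagonal κ - Λ).mulVec v) := by
        simpa using h2
      exact h3.le
  -- global bound
  have hglobal : ∀ θ, f θ ≤ f μ := by
    intro θ
    have hfμ : f μ = ∑ i, κ i := by simp [hf]
    rw [hf θ, hfμ]
    have hQ := hQnn (fun j => Real.sin (θ j - μ j))
    rw [q_form] at hQ
    have hΛle : dotProduct (fun j => Real.sin (θ j - μ j))
        (Λ.mulVec (fun j => Real.sin (θ j - μ j)))
        ≤ ∑ i, κ i * Real.sin (θ i - μ i) ^ 2 := by linarith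
    rw [dp_form]
    have hptwise : ∑ i, (κ i * Real.cos (θ i - μ i) + (1/2) * (κ i * Real.sin (θ i - μ i) ^ 2))
        ≤ ∑ i, κ i := by
      apply Finset.sum_le_sum
      intro i _
      have h1 := Real.sin_sq_add_cos_sq (θ i - μ i)
      have h2 := Real.cos_le_one (θ i - μ i)
      nlinarith [hκ i, sq_nonneg (1 - Real.cos (θ i - μ i)), mul_nonneg (hκ i)
        (sq_nonneg (1 - Real.cos (θ i - μ i)))]
    rw [Finset.sum_add_distrib, ← Finset.mul_sum] at hptwise
    linarith
  refine ⟨Filter.Eventually.of_forall hglobal, hglobal, ?_⟩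
  -- local maxima
  intro θ hmax i
  -- the key coordinatewise facts
  have hkey : ∀ i : Fin p, 0 < Real.cos (θ i - μ i) ∧
      κ i * Real.sin (θ i - μ i)
        = (∑ j, Λ i j * Real.sin (θ j - μ j)) * Real.cos (θ i - μ i) := by
    intro i
    set B : ℝ := ∑ j, Λ i j * Real.sin (θ j - μ j) with hB
    have hgmax : IsLocalMax (fun t => f (Function.update θ i t)) (θ i) := by
      have hcont : ContinuousAt (fun t : ℝ => Function.update θ i t) (θ i) := by
        apply Continuous.continuousAt
        apply continuous_pi
        intro j
        rcases eq_or_ne j i with h | h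
        · subst h
          simp only [Function.update_self]
          exact continuous_id
        · simp only [Function.update_of_ne h]
          exact continuous_const
      have ht : Filter.Tendsto (fun t : ℝ => Function.update θ i t) (nhds (θ i)) (nhds θ) := by
        simpa [Function.update_eq_self] using hcont.tendsto
      have h2 := ht.eventually hmax
      simpa [IsLocalMax, IsMaxFilter, Function.update_eq_self] using h2
    -- derivative is zero
    have hline : HasDerivAt (fun t : ℝ => t - μ i) 1 (θ i) :=
      (hasDerivAt_id (θ i)).sub_const (μ i)
    have hcos : HasDerivAt (fun t : ℝ => Real.cos (t - μ i))
        (-Real.sin (θ i - μ i)) (θ i) := by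
      simpa [Function.comp_def] using (Real.hasDerivAt_cos (θ i - μ i)).comp (θ i) hline
    have hsin : HasDerivAt (fun t : ℝ => Real.sin (t - μ i))
        (Real.cos (θ i - μ i)) (θ i) := by
      simpa [Function.comp_def] using (Real.hasDerivAt_sin (θ i - μ i)).comp (θ i) hline
    have hgfun : (fun t => f (Function.update θ i t))
        = fun t => f θ + κ i * (Real.cos (t - μ i) - Real.cos (θ i - μ i))
          + B * (Real.sin (t - μ i) - Real.sin (θ i - μ i)) :=
      funext fun t => expand_update μ κ Λ hΛsym hΛdiag f hf θ i t
    have hder : HasDerivAt (fun t => f (Function.update θ i t))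
        (κ i * (-Real.sin (θ i - μ i)) + B * Real.cos (θ i - μ i)) (θ i) := by
      rw [hgfun]
      have h1 := ((hcos.sub_const (Real.cos (θ i - μ i))).const_mul (κ i)).const_add (f θ)
      have h2 := (hsin.sub_const (Real.sin (θ i - μ i))).const_mul B
      exact h1.add h2
    have hrel : κ i * Real.sin (θ i - μ i) = B * Real.cos (θ i - μ i) := by
      have hd0 := hgmax.deriv_eq_zero
      rw [hder.deriv] at hd0
      linarith
    have hpyth := Real.sin_sq_add_cos_sq (θ i - μ i)
    have hκi := hκpos i
    have hcpos : 0 < Real.cos (θ i - μ i) := by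
      by_contra hc
      push_neg at hc
      rcases hc.lt_or_eq with hlt | heq
      · -- cos < 0 : contradiction with local max
        set D : ℝ := κ i * Real.cos (θ i - μ i) + B * Real.sin (θ i - μ i) with hDdef
        have hDc : D * Real.cos (θ i - μ i) = κ i := by
          have h1 : B * Real.sin (θ i - μ i) * Real.cos (θ i - μ i)
              = κ i * Real.sin (θ i - μ i) ^ 2 := by
            linear_combination (-Real.sin (θ i - μ i)) * hrel
          rw [hDdef]
          linear_combination h1 + κ i * hpyth
        have hD : D < 0 := by
          by_contra hD
          push_neg at hD
          nlinarith [mul_nonpos_of_nonneg_of_nonpos hD hlt.le]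
        obtain ⟨ε, hε, hball⟩ := Metric.eventually_nhds_iff.mp hgmax
        set t0 : ℝ := min (ε / 2) 1 with ht0def
        have ht0pos : 0 < t0 := lt_min (by linarith) one_pos
        have ht0le : t0 ≤ 1 := min_le_right _ _
        have ht0ε : t0 < ε := lt_of_le_of_lt (min_le_left _ _) (by linarith)
        have hclt : Real.cos t0 < 1 := by
          have hne1 : Real.cos t0 ≠ 1 := by
            intro h
            have hpi := Real.pi_gt_three
            have h2 := (Real.cos_eq_one_iff_of_lt_of_lt
              (by linarith) (by linarith)).mp h
            linarith
          exact lt_of_le_of_ne (Real.cos_le_one t0) hne1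
        have happ := hball (y := θ i + t0) (by
          simp only [Real.dist_eq]
          rw [show θ i + t0 - θ i = t0 by ring, abs_of_pos ht0pos]
          exact ht0ε)
        have hval : f (Function.update θ i (θ i + t0)) = f θ + D * (Real.cos t0 - 1) := by
          rw [expand_update μ κ Λ hΛsym hΛdiag f hf θ i (θ i + t0)]
          have e1 : Real.cos (θ i + t0 - μ i)
              = Real.cos (θ i - μ i) * Real.cos t0 - Real.sin (θ i - μ i) * Real.sin t0 := by
            rw [show θ i + t0 - μ i = (θ i - μ i) + t0 by ring, Real.cos_add]
          have e2 : Real.sin (θ i + t0 - μ i)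
              = Real.sin (θ i - μ i) * Real.cos t0 + Real.cos (θ i - μ i) * Real.sin t0 := by
            rw [show θ i + t0 - μ i = (θ i - μ i) + t0 by ring, Real.sin_add]
          rw [e1, e2, hDdef, ← hB]
          linear_combination (-Real.sin t0) * hrel
        have hgt : f θ < f (Function.update θ i (θ i + t0)) := by
          rw [hval]
          nlinarith [hD, hclt]
        have hle : f (Function.update θ i (θ i + t0)) ≤ f (Function.update θ i (θ i)) := happ
        rw [Function.update_eq_self] at hle
        linarith
      · -- cos = 0 : impossible
        have hs0 : Real.sin (θ i - μ i) = 0 := by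
          have h1 : κ i * Real.sin (θ i - μ i) = 0 := by rw [hrel, heq, mul_zero]
          exact (mul_eq_zero.mp h1).resolve_left (ne_of_gt hκi)
        rw [hs0, heq] at hpyth
        norm_num at hpyth
    exact ⟨hcpos, hrel⟩
  -- all sines vanish
  have hs0 : ∀ j, Real.sin (θ j - μ j) = 0 := by
    by_contra h
    push_neg at h
    obtain ⟨i0, hi0⟩ := h
    have hsvne : (fun j => Real.sin (θ j - μ j)) ≠ (0 : Fin p → ℝ) := fun h0 =>
      hi0 (by simpa using congrFun h0 i0)
    have hQpos0 := hP.dotProduct_mulVec_pos hsvne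
    have hQpos : (0:ℝ) < dotProduct (fun j => Real.sin (θ j - μ j))
        ((Matrix.diagonal κ - Λ).mulVec (fun j => Real.sin (θ j - μ j))) := by
      simpa using hQpos0
    rw [q_form] at hQpos
    have hBdot : dotProduct (fun j => Real.sin (θ j - μ j))
        (Λ.mulVec (fun j => Real.sin (θ j - μ j)))
        = ∑ i, Real.sin (θ i - μ i) * ∑ j, Λ i j * Real.sin (θ j - μ j) := by
      simp only [dotProduct, Matrix.mulVec]
    rw [hBdot] at hQpos
    have hterm : ∀ i : Fin p, κ i * Real.sin (θ i - μ i) ^ 2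
        ≤ Real.sin (θ i - μ i) * ∑ j, Λ i j * Real.sin (θ j - μ j) := by
      intro i
      obtain ⟨hc, hr⟩ := hkey i
      have h1 : Real.sin (θ i - μ i) * (∑ j, Λ i j * Real.sin (θ j - μ j))
          * Real.cos (θ i - μ i) = κ i * Real.sin (θ i - μ i) ^ 2 := by
        linear_combination (-Real.sin (θ i - μ i)) * hr
      have hX0 : 0 ≤ Real.sin (θ i - μ i) * ∑ j, Λ i j * Real.sin (θ j - μ j) := by
        nlinarith [h1, hc, mul_nonneg (hκ i) (sq_nonneg (Real.sin (θ i - μ i)))]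
      nlinarith [hX0, h1, hc, Real.cos_le_one (θ i - μ i)]
    have hsum : ∑ i, κ i * Real.sin (θ i - μ i) ^ 2
        ≤ ∑ i, Real.sin (θ i - μ i) * ∑ j, Λ i j * Real.sin (θ j - μ j) :=
      Finset.sum_le_sum fun i _ => hterm i
    linarith
  -- conclude
  have hc := (hkey i).1
  have hsin := hs0 i
  have hpyth := Real.sin_sq_add_cos_sq (θ i - μ i)
  have hc1 : Real.cos (θ i - μ i) = 1 := by
    rw [hsin] at hpyth
    nlinarith [hc, hpyth]
  obtain ⟨n, hn⟩ := (Real.cos_eq_one_iff (θ i - μ i)).mp hc1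
  exact ⟨n, by linear_combination -hn⟩
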